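/- If k/n = l/(l+1) with l ≥ 0 and n = (l+1)(n-k), then the set Δ = {0, 1, n-k, n-k+1, 2(n-k), 2(n-k)+1, ..., l(n-k), l(n-k)+1} ⊆ Z/n of size 2l+2 is a minimal non-face of N(n,k): Δ is not a face of N(n,k), but every proper subset of Δ is a face. -/

import Mathlib

/-- The discrete circular arc `[i, i+k]ₙ ⊆ ℤ/n`. -/
def cyclicArc (n k : ℕ) (i : ZMod n) : Finset (ZMod n) :=
  (Finset.range (k + 1)).image (fun j : ℕ => i + (j : ZMod n))

/-- `σ` is a face of the nerve complex `N(n,k)`: it is contained in some cyclic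
interval `[i, i+k]ₙ`. -/
def IsFaceN (n k : ℕ) (σ : Finset (ZMod n)) : Prop :=
  ∃ i : ZMod n, σ ⊆ cyclicArc n k i


/-- The set `Δ = {0, 1, n-k, n-k+1, 2(n-k), 2(n-k)+1, …, l(n-k), l(n-k)+1} ⊆ ℤ/n`. -/
def deltaSet (n k l : ℕ) : Finset (ZMod n) :=
  (Finset.range (l + 1)).biUnion
    (fun a => {((a * (n - k) : ℕ) : ZMod n), ((a * (n - k) : ℕ) : ZMod n) + 1})

lemma zmod_cast_inj {n x y : ℕ} (hx : x < n) (hy : y < n)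
    (h : (x : ZMod n) = (y : ZMod n)) : x = y := by
  have h2 := (ZMod.natCast_eq_natCast_iff x y n).mp h
  simpa [Nat.ModEq, Nat.mod_eq_of_lt hx, Nat.mod_eq_of_lt hy] using h2

lemma cast_mem_arc {n k p q : ℕ} (j : ℕ) (hj : j ≤ k)
    (h : q = p + j ∨ q + n = p + j) :
    ((q : ℕ) : ZMod n) ∈ cyclicArc n k ((p : ℕ) : ZMod n) := by
  refine Finset.mem_image.mpr ⟨j, Finset.mem_range.mpr (by omega), ?_⟩
  rcases h with h | h
  · subst h; push_cast; ring
  · have h2 : ((p + j : ℕ) : ZMod n) = ((q : ℕ) : ZMod n) := by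
      rw [← h]; push_cast [ZMod.natCast_self]; ring
    push_cast at h2 ⊢
    exact h2

lemma mem_deltaSet {n k l m : ℕ} (hm : n - k = m) {x : ZMod n} :
    x ∈ deltaSet n k l ↔
      ∃ a, a ≤ l ∧ (x = ((a * m : ℕ) : ZMod n) ∨ x = ((a * m + 1 : ℕ) : ZMod n)) := by
  subst hm
  simp only [deltaSet, Finset.mem_biUnion, Finset.mem_range, Finset.mem_insert,
    Finset.mem_singleton, Nat.lt_succ_iff, Nat.cast_add, Nat.cast_one]

/-- if `k/n = l/(l+1)` (so `n = (l+1)(n-k)`), with `k ≤ n-2`, then `Δ` has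
size `2l+2` and is a minimal non-face of `N(n,k)`: `Δ` is not a face, but every proper
subset of `Δ` is a face. -/
theorem deltaSet_minimal_nonface (n k l : ℕ) [NeZero n]
    (hfrac : k * (l + 1) = l * n) (hn : n = (l + 1) * (n - k)) (hk : k + 2 ≤ n) :
    (deltaSet n k l).card = 2 * l + 2 ∧
    ¬ IsFaceN n k (deltaSet n k l) ∧
    ∀ τ : Finset (ZMod n), τ ⊂ deltaSet n k l → IsFaceN n k τ := by
  obtain ⟨m, hm⟩ : ∃ m, n - k = m := ⟨_, rfl⟩
  have hm2 : 2 ≤ m := by omega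
  have hn2 : n = l * m + m := by
    rw [hn, hm]; ring
  have hkeq : k = l * m := by omega
  haveI hFact : Fact (1 < n) := ⟨by omega⟩
  have hlt : ∀ a, a ≤ l → a * m + 1 < n := by
    intro a ha
    have := mul_le_mul_left ha m
    omega
  have hne_cast : ∀ {x y : ℕ}, x < n → y < n → x ≠ y → (x : ZMod n) ≠ (y : ZMod n) :=
    fun hx hy hxy h => hxy (zmod_cast_inj hx hy h)
  -- cardinality
  have hcard : (deltaSet n k l).card = 2 * l + 2 := by
    rw [deltaSet]
    simp only [hm]
    rw [Finset.card_biUnion]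
    · have hpair : ∀ a ∈ Finset.range (l + 1),
          ({((a * m : ℕ) : ZMod n), ((a * m : ℕ) : ZMod n) + 1} : Finset (ZMod n)).card = 2 := by
        intro a _
        refine Finset.card_pair ?_
        intro h
        exact one_ne_zero (left_eq_add.mp h)
      rw [Finset.sum_congr rfl hpair, Finset.sum_const, Finset.card_range, smul_eq_mul]
      omega
    · intro a ha b hb hab
      rw [Finset.mem_coe, Finset.mem_range, Nat.lt_succ_iff] at ha hb
      rw [Function.onFun, Finset.disjoint_left]
      intro x hx hx'
      simp only [Finset.mem_insert, Finset.mem_singleton] at hx hx'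
      have e1 : ((a * m + 1 : ℕ) : ZMod n) = ((a * m : ℕ) : ZMod n) + 1 := by push_cast; ring
      have e2 : ((b * m + 1 : ℕ) : ZMod n) = ((b * m : ℕ) : ZMod n) + 1 := by push_cast; ring
      rw [← e1] at hx
      rw [← e2] at hx'
      have ha' : a * m + 1 < n := hlt a ha
      have hb' : b * m + 1 < n := hlt b hb
      have hab' : a * m + m ≤ b * m ∨ b * m + m ≤ a * m := by
        rcases Nat.lt_or_ge a b with h | h
        · left
          have := mul_le_mul_left (show a + 1 ≤ b by omega) m
          rw [add_mul, one_mul] at this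
          omega
        · right
          have := mul_le_mul_left (show b + 1 ≤ a by omega) m
          rw [add_mul, one_mul] at this
          omega
      rcases hx with rfl | rfl <;> rcases hx' with h | h <;>
        exact hne_cast (by omega) (by omega) (by omega) h
  -- not a face
  have hnonface : ¬ IsFaceN n k (deltaSet n k l) := by
    rintro ⟨i, hsub⟩
    obtain ⟨c0, hc0cast, hc0n⟩ :
        ∃ c0 : ℕ, ((c0 : ℕ) : ZMod n) = -i ∧ c0 < n :=
      ⟨(-i).val, ZMod.natCast_rightInverse (-i), ZMod.val_lt _⟩
    obtain ⟨q, r, hdm, hr⟩ : ∃ q r, q * m + r = c0 ∧ r < m :=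
      ⟨c0 / m, c0 % m, Nat.div_add_mod' c0 m, Nat.mod_lt _ (by omega)⟩
    have hq : q ≤ l := by
      by_contra hql
      have : (l + 1) * m ≤ q * m := mul_le_mul_left (by omega) m
      rw [add_mul, one_mul] at this
      omega
    have key : (l - q) * m + q * m = l * m := by
      rw [← add_mul]
      congr 1
      omega
    rcases Nat.eq_zero_or_pos r with hr0 | hr1
    · -- r = 0 : use the element (l-q)*m + 1
      have hz : (((l - q) * m + 1 : ℕ) : ZMod n) ∈ deltaSet n k l :=
        (mem_deltaSet hm).mpr ⟨l - q, by omega, Or.inr rfl⟩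
      obtain ⟨j, hjr, hje⟩ := Finset.mem_image.mp (hsub hz)
      rw [Finset.mem_range] at hjr
      push_cast at hje
      have hcast : (((l - q) * m + 1 + c0 : ℕ) : ZMod n) = ((j : ℕ) : ZMod n) := by
        push_cast
        rw [hc0cast]
        linear_combination -hje
      have heq := zmod_cast_inj (by omega) (by omega) hcast
      omega
    · -- r ≥ 1 : use the element (l-q)*m
      have hz : (((l - q) * m : ℕ) : ZMod n) ∈ deltaSet n k l :=
        (mem_deltaSet hm).mpr ⟨l - q, by omega, Or.inl rfl⟩
      obtain ⟨j, hjr, hje⟩ := Finset.mem_image.mp (hsub hz)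
      rw [Finset.mem_range] at hjr
      push_cast at hje
      have hcast : (((l - q) * m + c0 : ℕ) : ZMod n) = ((j : ℕ) : ZMod n) := by
        push_cast
        rw [hc0cast]
        linear_combination -hje
      have heq := zmod_cast_inj (by omega) (by omega) hcast
      omega
  -- every proper subset is a face
  have hface : ∀ τ : Finset (ZMod n), τ ⊂ deltaSet n k l → IsFaceN n k τ := by
    intro τ hτ
    obtain ⟨x, hxΔ, hxτ⟩ := Finset.exists_of_ssubset hτ
    obtain ⟨a, ha, hx⟩ := (mem_deltaSet hm).mp hxΔ
    rcases hx with rfl | rfl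
    · -- removed x = a*m ; arc starts at a*m + 1
      refine ⟨((a * m + 1 : ℕ) : ZMod n), fun y hy => ?_⟩
      obtain ⟨b, hb, hy'⟩ := (mem_deltaSet hm).mp (hτ.subset hy)
      rcases hy' with rfl | rfl
      · have hba : b ≠ a := fun h => hxτ (h ▸ hy)
        rcases Nat.lt_or_ge a b with h | h
        · have hbm : a * m + (b - a) * m = b * m := by
            rw [← add_mul]; congr 1; omega
          have hle : (b - a) * m ≤ l * m := mul_le_mul_left (by omega) m
          have hge : m ≤ (b - a) * m := by
            have := mul_le_mul_left (show 1 ≤ b - a by omega) m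
            rwa [one_mul] at this
          exact cast_mem_arc ((b - a) * m - 1) (by omega) (Or.inl (by omega))
        · have h1 : a * m + (b + l + 1 - a) * m = b * m + (l * m + m) := by
            rw [← add_mul]
            have h2 : (b + (l + 1)) * m = b * m + (l * m + m) := by ring
            rw [← h2]
            congr 1
            omega
          have hle : (b + l + 1 - a) * m ≤ l * m := mul_le_mul_left (by omega) m
          have hge : m ≤ (b + l + 1 - a) * m := by
            have := mul_le_mul_left (show 1 ≤ b + l + 1 - a by omega) m
            rwa [one_mul] at this
          exact cast_mem_arc ((b + l + 1 - a) * m - 1) (by omega) (Or.inr (by omega))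
      · rcases Nat.lt_or_ge b a with h | h
        · have h1 : a * m + (b + l + 1 - a) * m = b * m + (l * m + m) := by
            rw [← add_mul]
            have h2 : (b + (l + 1)) * m = b * m + (l * m + m) := by ring
            rw [← h2]
            congr 1
            omega
          have hle : (b + l + 1 - a) * m ≤ l * m := mul_le_mul_left (by omega) m
          exact cast_mem_arc ((b + l + 1 - a) * m) (by omega) (Or.inr (by omega))
        · have hbm : a * m + (b - a) * m = b * m := by
            rw [← add_mul]; congr 1; omega
          have hle : (b - a) * m ≤ l * m := mul_le_mul_left (by omega) m
          exact cast_mem_arc ((b - a) * m) (by omega) (Or.inl (by omega))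
    · -- removed x = a*m + 1 ; arc starts at (a+1)*m
      refine ⟨(((a + 1) * m : ℕ) : ZMod n), fun y hy => ?_⟩
      obtain ⟨b, hb, hy'⟩ := (mem_deltaSet hm).mp (hτ.subset hy)
      rcases hy' with rfl | rfl
      · rcases Nat.lt_or_ge b (a + 1) with h | h
        · have h1 : (a + 1) * m + (b + l - a) * m = b * m + (l * m + m) := by
            rw [← add_mul]
            have h2 : (b + (l + 1)) * m = b * m + (l * m + m) := by ring
            rw [← h2]
            congr 1
            omega
          have hle : (b + l - a) * m ≤ l * m := mul_le_mul_left (by omega) m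
          exact cast_mem_arc ((b + l - a) * m) (by omega) (Or.inr (by omega))
        · have h1 : (a + 1) * m + (b - a - 1) * m = b * m := by
            rw [← add_mul]; congr 1; omega
          have hle : (b - a - 1) * m ≤ l * m := mul_le_mul_left (by omega) m
          exact cast_mem_arc ((b - a - 1) * m) (by omega) (Or.inl (by omega))
      · have hba : b ≠ a := fun h => hxτ (h ▸ hy)
        rcases Nat.lt_or_ge b a with h | h
        · have h1 : (a + 1) * m + (b + l - a) * m = b * m + (l * m + m) := by
            rw [← add_mul]
            have h2 : (b + (l + 1)) * m = b * m + (l * m + m) := by ring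
            rw [← h2]
            congr 1
            omega
          have hle : (b + l - a) * m + m ≤ l * m := by
            have := mul_le_mul_left (show (b + l - a) + 1 ≤ l by omega) m
            rw [add_mul, one_mul] at this
            omega
          exact cast_mem_arc ((b + l - a) * m + 1) (by omega) (Or.inr (by omega))
        · have hba' : a < b := by omega
          have h1 : (a + 1) * m + (b - a - 1) * m = b * m := by
            rw [← add_mul]; congr 1; omega
          have hle : (b - a - 1) * m + m ≤ l * m := by
            have := mul_le_mul_left (show (b - a - 1) + 1 ≤ l by omega) m
            rw [add_mul, one_mul] at this
            omega
          exact cast_mem_arc ((b - a - 1) * m + 1) (by omega) (Or.inl (by omega))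
  exact ⟨hcard, hnonface, hface⟩
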